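/- arXiv:2209.13998 — 2 statements merged into one kernel-verified Lean document; each statement's English description precedes it below -/
import Mathlib

section
/- Let G = (V, E) be a finite graph, T > 0, p = 1 − exp(−2/T), and h : V → ℝ, with Edwards–Sokal weight w_h(σ, ω) = Π_{e={x,y}∈E} [(1−p)·1{ω(e)=0} + p·1{ω(e)=1}·1{σ_x = σ_y}] · exp((1/T) Σ_{x∈V} σ_x h_x). Then for every ω ∈ {0,1}^E, Σ_{σ∈{−1,1}^V} w_h(σ, ω) = Π_{e∈E} p^{ω(e)} (1−p)^{1−ω(e)} · Π_{j=1}^{η(ω)} 2 cosh(h_{𝒞_j} / T), where 𝒞_1, …, 𝒞_{η(ω)} are the open clusters of ω (connected components of the graph (V, {e : ω(e) = 1})), η(ω) is their number, h_A = Σ_{x∈A} h_x, and cosh z = (e^z + e^{−z})/2. -/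
open scoped BigOperators
open Finset

noncomputable section

namespace EdwardsSokal

open scoped Classical

variable {V : Type}

/-- The `±1`-spin attached to a Boolean. -/
def spin (b : Bool) : ℝ := if b then 1 else -1

/-- The indicator `1{σ_x = σ_y}` of agreement of the two spins on an unordered pair. -/
def agreeInd (σ : V → Bool) : Sym2 V → ℝ :=
  Sym2.lift ⟨fun x y => if σ x = σ y then (1 : ℝ) else 0, fun x y => by simp [eq_comm]⟩

/-- The product `σ_x σ_y` of the two spins on an unordered pair. -/
def pairSpin (σ : V → Bool) : Sym2 V → ℝ :=
  Sym2.lift ⟨fun x y => spin (σ x) * spin (σ y), fun x y => mul_comm _ _⟩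

/-- The Edwards–Sokal weight
`w_h(σ, ω) = Π_{e = {x,y} ∈ E} [(1-p) 1{ω(e)=0} + p 1{ω(e)=1} 1{σ_x = σ_y}] ·
  exp((1/T) Σ_x σ_x h_x)` with `p = 1 - exp(-2/T)` (so `1 - p = exp(-2/T)`). -/
def esWeight [Fintype V] (E : Finset (Sym2 V)) (T : ℝ) (h : V → ℝ)
    (σ : V → Bool) (ω : {e : Sym2 V // e ∈ E} → Bool) : ℝ :=
  (∏ e : {e : Sym2 V // e ∈ E},
      (Real.exp (-2 / T) * (if ω e = false then 1 else 0) +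
        (1 - Real.exp (-2 / T)) * (if ω e = true then 1 else 0) * agreeInd σ e.1)) *
    Real.exp ((1 / T) * ∑ x, spin (σ x) * h x)


/-- Connectivity by open edges of `ω`. -/
def openConn [Fintype V] (E : Finset (Sym2 V)) (ω : {e : Sym2 V // e ∈ E} → Bool) :
    V → V → Prop :=
  Relation.ReflTransGen fun x y =>
    ∃ e : {e : Sym2 V // e ∈ E}, ω e = true ∧ x ∈ e.1 ∧ y ∈ e.1 ∧ x ≠ y

/-- The open cluster of a vertex `x`. -/
def clusterOf [Fintype V] (E : Finset (Sym2 V)) (ω : {e : Sym2 V // e ∈ E} → Bool)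
    (x : V) : Finset V :=
  Finset.univ.filter fun y => openConn E ω x y

/-- The collection of all open clusters of `ω` (isolated vertices count as
clusters); its cardinality is `η(ω)`. -/
def clustersOf [Fintype V] (E : Finset (Sym2 V)) (ω : {e : Sym2 V // e ∈ E} → Bool) :
    Finset (Finset V) :=
  Finset.univ.image fun x => clusterOf E ω x

section Aux
variable [Fintype V] {E : Finset (Sym2 V)} {ω : {e : Sym2 V // e ∈ E} → Bool}

lemma openConn_symm {x y : V} (hxy : openConn E ω x y) : openConn E ω y x := by
  refine @Std.Symm.symm _ _ (@Relation.ReflTransGen.stdSymm _ _ ⟨?_⟩) _ _ hxy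
  rintro a b ⟨e, he, ha, hb, hne⟩
  exact ⟨e, he, hb, ha, hne.symm⟩

lemma mem_clusterOf {x y : V} : y ∈ clusterOf E ω x ↔ openConn E ω x y := by
  simp [clusterOf]

lemma clusterOf_eq_of_conn {x y : V} (hxy : openConn E ω x y) :
    clusterOf E ω x = clusterOf E ω y := by
  ext z
  simp only [mem_clusterOf]
  exact ⟨fun hz => (openConn_symm hxy).trans hz, fun hz => hxy.trans hz⟩

lemma clusterOf_eq_of_mem {C : Finset V} {x : V} (hC : C ∈ clustersOf E ω) (hx : x ∈ C) :
    clusterOf E ω x = C := by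
  obtain ⟨z, -, rfl⟩ := Finset.mem_image.mp hC
  exact (clusterOf_eq_of_conn (mem_clusterOf.mp hx)).symm

lemma exists_bad_edge {σ : V → Bool} {x y : V} (hconn : openConn E ω x y)
    (hne : σ x ≠ σ y) :
    ∃ e : {e : Sym2 V // e ∈ E}, ω e = true ∧ agreeInd σ e.1 = 0 := by
  induction hconn with
  | refl => exact absurd rfl hne
  | @tail b c hxb hbc ih =>
    obtain ⟨e, he, hb, hc, hbc'⟩ := hbc
    by_cases hσ : σ x = σ b
    · refine ⟨e, he, ?_⟩
      have heq : e.1 = s(b, c) := (Sym2.mem_and_mem_iff hbc').mp ⟨hb, hc⟩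
      rw [heq]
      simp only [agreeInd, Sym2.lift_mk]
      rw [if_neg (hσ ▸ hne)]
    · exact ih hσ

lemma esWeight_eq (hE : ∀ e ∈ E, ¬ e.IsDiag) (T : ℝ) (h : V → ℝ) (σ : V → Bool) :
    esWeight E T h σ ω =
      if ∀ x y, openConn E ω x y → σ x = σ y then
        (∏ e : {e : Sym2 V // e ∈ E},
            if ω e then 1 - Real.exp (-2 / T) else Real.exp (-2 / T)) *
          Real.exp ((1 / T) * ∑ x, spin (σ x) * h x)
      else 0 := by
  unfold esWeight
  split_ifs with hgood
  · congr 1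
    refine Finset.prod_congr rfl fun e _ => ?_
    rcases e with ⟨q, hq⟩
    cases hω : ω ⟨q, hq⟩ with
    | false => simp
    | true =>
      simp only [hω, if_true, if_false]
      induction q using Sym2.ind with
      | _ a b =>
        have hab : a ≠ b := by
          intro hab; exact hE _ hq (by simp [hab])
        have hconn : openConn E ω a b :=
          Relation.ReflTransGen.single ⟨⟨s(a, b), hq⟩, hω, Sym2.mem_mk_left a b,
            Sym2.mem_mk_right a b, hab⟩
        have : agreeInd σ s(a, b) = 1 := by
          simp only [agreeInd, Sym2.lift_mk]
          rw [if_pos (hgood a b hconn)]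
        rw [this]; simp
  · push_neg at hgood
    obtain ⟨x, y, hconn, hne⟩ := hgood
    obtain ⟨e, he, hag⟩ := exists_bad_edge hconn hne
    have : (∏ e : {e : Sym2 V // e ∈ E},
        (Real.exp (-2 / T) * (if ω e = false then 1 else 0) +
          (1 - Real.exp (-2 / T)) * (if ω e = true then 1 else 0) * agreeInd σ e.1)) = 0 := by
      apply Finset.prod_eq_zero (Finset.mem_univ e)
      simp [he, hag]
    rw [this, zero_mul]


lemma clusterOf_mem_clustersOf (x : V) : clusterOf E ω x ∈ clustersOf E ω :=
  Finset.mem_image_of_mem _ (mem_univ x)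

lemma exists_rep {C : Finset V} (hC : C ∈ clustersOf E ω) :
    ∃ x, clusterOf E ω x = C := by
  obtain ⟨x, -, hx⟩ := Finset.mem_image.mp hC
  exact ⟨x, hx⟩

lemma self_mem_clusterOf (x : V) : x ∈ clusterOf E ω x :=
  mem_clusterOf.mpr Relation.ReflTransGen.refl

lemma univ_eq_biUnion [DecidableEq V] (E : Finset (Sym2 V))
    (ω : {e : Sym2 V // e ∈ E} → Bool) :
    (univ : Finset V) = (clustersOf E ω).biUnion id := by
  ext x
  simp only [mem_univ, true_iff, Finset.mem_biUnion, id]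
  exact ⟨clusterOf E ω x, clusterOf_mem_clustersOf x, self_mem_clusterOf x⟩

lemma clusters_pwd : ((clustersOf E ω : Finset (Finset V)) : Set (Finset V)).PairwiseDisjoint id := by
  intro C hC D hD hCD
  simp only [Function.onFun, id]
  rw [Finset.disjoint_left]
  intro z hzC hzD
  exact hCD ((clusterOf_eq_of_mem (Finset.mem_coe.mp hC) hzC).symm.trans
    (clusterOf_eq_of_mem (Finset.mem_coe.mp hD) hzD))

end Aux

/-- **Lemma (Edwards–Sokal marginal on percolation configurations).** For every `ω`,
`Σ_σ w_h(σ, ω) = Π_{e ∈ E} p^{ω(e)} (1-p)^{1-ω(e)} · Π_{j=1}^{η(ω)} 2 cosh(h_{𝒞_j}/T)`,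
the product being over the open clusters of `ω`. -/
theorem statement13 [Fintype V] [DecidableEq V] (E : Finset (Sym2 V))
    (hE : ∀ e ∈ E, ¬ e.IsDiag) (T : ℝ) (hT : 0 < T) (h : V → ℝ)
    (ω : {e : Sym2 V // e ∈ E} → Bool) :
    ∑ σ : V → Bool, esWeight E T h σ ω =
      (∏ e : {e : Sym2 V // e ∈ E},
          if ω e then 1 - Real.exp (-2 / T) else Real.exp (-2 / T)) *
        ∏ C ∈ clustersOf E ω, 2 * Real.cosh ((∑ x ∈ C, h x) / T) := by
  classical
  have hrw : ∀ σ : V → Bool, esWeight E T h σ ω =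
      if ∀ x y, openConn E ω x y → σ x = σ y then
        (∏ e : {e : Sym2 V // e ∈ E},
            if ω e then 1 - Real.exp (-2 / T) else Real.exp (-2 / T)) *
          Real.exp ((1 / T) * ∑ x, spin (σ x) * h x)
      else 0 := fun σ => esWeight_eq hE T h σ
  rw [Finset.sum_congr rfl fun σ _ => hrw σ, ← Finset.sum_filter, ← Finset.mul_sum]
  congr 1
  have hpick : ∀ C : {C // C ∈ clustersOf E ω}, ∃ x : V, clusterOf E ω x = C.1 := by
    intro C
    exact exists_rep C.2
  set pk : {C // C ∈ clustersOf E ω} → V := fun C => (hpick C).choose with hpkdef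
  have hpk : ∀ C, clusterOf E ω (pk C) = C.1 := fun C => (hpick C).choose_spec
  have key : ∀ z : ℝ, (∑ b : Bool, Real.exp (spin b * z)) = 2 * Real.cosh z := by
    intro z
    rw [Fintype.sum_bool]
    norm_num [spin, Real.cosh_eq]
    ring
  trans (∑ s : {C // C ∈ clustersOf E ω} → Bool, ∏ C : {C // C ∈ clustersOf E ω},
      Real.exp (spin (s C) * ((∑ x ∈ C.1, h x) / T)))
  · refine Finset.sum_bij' (fun σ _ => fun C => σ (pk C))
      (fun s _ => fun x => s ⟨clusterOf E ω x, clusterOf_mem_clustersOf x⟩)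
      (fun σ hσ => mem_univ _) (fun s hs => ?_) (fun σ hσ => ?_) (fun s hs => ?_)
      (fun σ hσ => ?_)
    · -- j s is good
      simp only [Finset.mem_filter, mem_univ, true_and]
      intro x y hxy
      simp only [clusterOf_eq_of_conn hxy]
    · -- left_inv : j (i σ) = σ
      funext x
      simp only
      have hgood : ∀ a b, openConn E ω a b → σ a = σ b := (Finset.mem_filter.mp hσ).2
      have hx : x ∈ clusterOf E ω (pk ⟨clusterOf E ω x, clusterOf_mem_clustersOf x⟩) := by
        rw [hpk ⟨clusterOf E ω x, clusterOf_mem_clustersOf x⟩]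
        exact self_mem_clusterOf x
      exact hgood _ x ((mem_clusterOf (x := pk ⟨clusterOf E ω x, clusterOf_mem_clustersOf x⟩)).mp hx)
    · -- right_inv : i (j s) = s
      funext C
      simp only
      congr 1
      exact Subtype.ext (hpk C)
    · -- values
      have hgood : ∀ a b, openConn E ω a b → σ a = σ b := (Finset.mem_filter.mp hσ).2
      rw [← Real.exp_sum]
      congr 1
      have h1 : ∑ x : V, spin (σ x) * h x
          = ∑ C ∈ (clustersOf E ω).attach, ∑ x ∈ C.1, spin (σ x) * h x := by
        rw [Finset.sum_attach (clustersOf E ω) (fun C => ∑ x ∈ C, spin (σ x) * h x)]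
        conv_lhs => rw [univ_eq_biUnion E ω]
        rw [Finset.sum_biUnion clusters_pwd]
        simp only [id_eq]
      rw [h1, Finset.mul_sum, Finset.univ_eq_attach]
      refine Finset.sum_congr rfl fun C _ => ?_
      have hconst : ∀ x ∈ C.1, spin (σ x) * h x = spin (σ (pk C)) * h x := by
        intro x hx
        have hcx : openConn E ω (pk C) x := by
          rw [← mem_clusterOf (x := pk C), hpk]
          exact hx
        rw [hgood (pk C) x hcx]
      rw [Finset.sum_congr rfl hconst, ← Finset.mul_sum]
      ring
  · trans (∏ C : {C // C ∈ clustersOf E ω}, ∑ b : Bool,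
        Real.exp (spin b * ((∑ x ∈ C.1, h x) / T)))
    · rw [Finset.prod_univ_sum, Fintype.piFinset_univ]
    · rw [Finset.prod_congr rfl fun C _ => key ((∑ x ∈ C.1, h x) / T)]
      rw [Finset.univ_eq_attach]
      exact Finset.prod_attach (clustersOf E ω) (fun C => 2 * Real.cosh ((∑ x ∈ C, h x) / T))


end EdwardsSokal
end
end

section
/- Let N ≥ 1, Λ = [−N,N]³ ∩ ℤ³, and let ∂_i Λ be the set of vertices of Λ having a nearest neighbor outside Λ. Suppose 𝖠 ⊆ Λ is connected (with respect to nearest-neighbor adjacency in ℤ³) and let 𝖴 be a connected component of Λ ∖ 𝖠 with 𝖴 ∩ ∂_i Λ = ∅. Then 𝖴 is simply connected in the sense that ψ(𝖴) = 𝖴, where ψ(𝖴) = {v ∈ Λ : every nearest-neighbor path in Λ from v to ∂_i Λ intersects 𝖴}. -/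
open Finset

noncomputable section

namespace Lattice

open scoped Classical

abbrev V : Type := Fin 3 → ℤ

/-- The box `Λ = [-N, N]³ ∩ ℤ³`. -/
def box (N : ℕ) : Finset V := Fintype.piFinset fun _ => Finset.Icc (-(N : ℤ)) (N : ℤ)

/-- The nearest neighbors of a vertex of `ℤ³` (`ℓ¹`-distance 1). -/
def nbrs (u : V) : Finset V :=
  (Finset.univ : Finset (Fin 3 × Bool)).image fun p =>
    Function.update u p.1 (u p.1 + if p.2 then 1 else -1)

/-- Connectivity of a finite set of vertices with respect to nearest-neighbor
adjacency. -/
def FinsetConn (S : Finset V) : Prop :=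
  ∀ x ∈ S, ∀ y ∈ S, Relation.ReflTransGen (fun a b => a ∈ S ∧ b ∈ S ∧ b ∈ nbrs a) x y

/-- The nearest-neighbor connected component of `x` inside `S`. -/
def compOf (S : Finset V) (x : V) : Finset V :=
  S.filter fun y => Relation.ReflTransGen (fun a b => a ∈ S ∧ b ∈ S ∧ b ∈ nbrs a) x y

/-- The internal boundary `∂_i Λ_N`: vertices of the box having a neighbor outside. -/
def ibdry (N : ℕ) : Finset V := (box N).filter fun v => ∃ w ∈ nbrs v, w ∉ box N

/-- `ψ(A)`: the set of vertices `v ∈ Λ_N` such that every nearest-neighbor path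
in `Λ_N` from `v` to `∂_i Λ_N` meets `A`. -/
def psi (N : ℕ) (A : Finset V) : Finset V :=
  (box N).filter fun v => v ∈ A ∨
    ∀ w ∈ ibdry N, ¬ Relation.ReflTransGen
      (fun x y => y ∈ nbrs x ∧ x ∈ box N ∧ x ∉ A ∧ y ∈ box N ∧ y ∉ A) v w

lemma mem_box {N : ℕ} {v : V} : v ∈ box N ↔ ∀ i, -(N:ℤ) ≤ v i ∧ v i ≤ N := by
  simp [box, Fintype.mem_piFinset, Finset.mem_Icc]

lemma mem_nbrs {u w : V} : w ∈ nbrs u ↔ ∃ i : Fin 3, ∃ b : Bool,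
    w = Function.update u i (u i + if b then 1 else -1) := by
  constructor
  · intro h
    obtain ⟨p, -, hp⟩ := Finset.mem_image.mp h
    exact ⟨p.1, p.2, hp.symm⟩
  · rintro ⟨i, b, rfl⟩
    exact Finset.mem_image.mpr ⟨(i, b), Finset.mem_univ _, rfl⟩

lemma nbrs_symm {u w : V} (h : w ∈ nbrs u) : u ∈ nbrs w := by
  rw [mem_nbrs] at h ⊢
  obtain ⟨i, b, rfl⟩ := h
  refine ⟨i, !b, ?_⟩
  funext j
  by_cases hj : j = i
  · subst hj
    simp only [Function.update_self]
    cases b <;> simp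
  · simp [Function.update_of_ne hj]

lemma box_conn (N : ℕ) : ∀ x ∈ box N, ∀ y ∈ box N,
    Relation.ReflTransGen (fun a b => a ∈ box N ∧ b ∈ box N ∧ b ∈ nbrs a) x y := by
  have key : ∀ d : ℕ, ∀ x y : V, x ∈ box N → y ∈ box N →
      (∑ i, (y i - x i).natAbs) = d →
      Relation.ReflTransGen (fun a b => a ∈ box N ∧ b ∈ box N ∧ b ∈ nbrs a) x y := by
    intro d
    induction d with
    | zero =>
      intro x y hx hy hsum
      have hxy : x = y := by
        funext i
        have := Finset.sum_eq_zero_iff.mp hsum i (Finset.mem_univ i)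
        omega
      subst hxy
      exact Relation.ReflTransGen.refl
    | succ d ih =>
      intro x y hx hy hsum
      have hi : ∃ i, (y i - x i).natAbs ≠ 0 := by
        by_contra hcon
        push_neg at hcon
        have : (∑ i, (y i - x i).natAbs) = 0 := Finset.sum_eq_zero fun i _ => hcon i
        omega
      obtain ⟨i, hi⟩ := hi
      have hne : x i ≠ y i := by omega
      set s : ℤ := if x i < y i then 1 else -1 with hs
      set b : Bool := decide (x i < y i) with hb
      have hbs : (if b then (1:ℤ) else -1) = s := by
        by_cases hlt : x i < y i <;> simp [hs, hb, hlt]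
      set x' : V := Function.update x i (x i + s) with hx'def
      have hxi := mem_box.mp hx i
      have hyi := mem_box.mp hy i
      have hx'i : x' i = x i + s := Function.update_self _ _ _
      have hx'b : x' ∈ box N := by
        rw [mem_box]
        intro j
        by_cases hj : j = i
        · rw [hj, hx'i]
          by_cases hlt : x i < y i <;> simp [hs, hlt] <;> omega
        · rw [hx'def, Function.update_of_ne hj]
          exact mem_box.mp hx j
      have hnbr : x' ∈ nbrs x := mem_nbrs.mpr ⟨i, b, by rw [hbs]⟩
      have hterm : (y i - x' i).natAbs + 1 = (y i - x i).natAbs := by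
        rw [hx'i]
        by_cases hlt : x i < y i <;> simp [hs, hlt] <;> omega
      have hsum' : (∑ j, (y j - x' j).natAbs) = d := by
        have h1 := Finset.add_sum_erase Finset.univ (fun j => (y j - x j).natAbs)
          (Finset.mem_univ i)
        have h2 := Finset.add_sum_erase Finset.univ (fun j => (y j - x' j).natAbs)
          (Finset.mem_univ i)
        have hrest : (∑ j ∈ Finset.univ.erase i, (y j - x' j).natAbs)
            = ∑ j ∈ Finset.univ.erase i, (y j - x j).natAbs := by
          refine Finset.sum_congr rfl fun j hj => ?_
          rw [hx'def, Function.update_of_ne (Finset.ne_of_mem_erase hj)]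
        rw [← h1] at hsum
        rw [← h2, hrest]
        omega
      exact Relation.ReflTransGen.head ⟨hx, hx'b, hnbr⟩ (ih x' y hx'b hy hsum')
  intro x hx y hy
  exact key _ x y hx hy rfl

/-- **Lemma (holes of connected sets are simply connected).** Let `A ⊆ Λ_N` be
connected and let `U` be a connected component of `Λ_N ∖ A` not meeting `∂_i Λ_N`.
Then `ψ(U) = U`. -/
theorem statement17 (N : ℕ) (hN : 1 ≤ N) (A U : Finset V)
    (hA : A ⊆ box N) (hAconn : FinsetConn A)
    (hU : ∃ v, v ∈ box N ∧ v ∉ A ∧ U = compOf (box N \ A) v)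
    (hUb : U ∩ ibdry N = ∅) :
    psi N U = U := by
  classical
  obtain ⟨v0, hv0b, hv0A, hUdef⟩ := hU
  have hUsub : U ⊆ box N \ A := by rw [hUdef]; exact Finset.filter_subset _ _
  have hUbox : ∀ u ∈ U, u ∈ box N := fun u hu => (Finset.mem_sdiff.mp (hUsub hu)).1
  have hUA : ∀ u ∈ U, u ∉ A := fun u hu => (Finset.mem_sdiff.mp (hUsub hu)).2
  have hAU : ∀ a ∈ A, a ∉ U := fun a ha hu => hUA a hu ha
  have hmax : ∀ y ∈ U, ∀ z, z ∈ nbrs y → z ∈ box N → z ∉ A → z ∈ U := by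
    intro y hy z hz hzb hzA
    rw [hUdef, compOf, Finset.mem_filter] at hy ⊢
    have hzmem : z ∈ box N \ A := Finset.mem_sdiff.mpr ⟨hzb, hzA⟩
    exact ⟨hzmem, hy.2.tail ⟨hy.1, hzmem, hz⟩⟩
  have hApath : ∀ a ∈ A, ∀ z ∈ A, Relation.ReflTransGen
      (fun x y => y ∈ nbrs x ∧ x ∈ box N ∧ x ∉ U ∧ y ∈ box N ∧ y ∉ U) a z := by
    intro a ha z hz
    refine Relation.ReflTransGen.mono ?_ _ _ (hAconn a ha z hz)
    rintro p q ⟨hp, hq, hn⟩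
    exact ⟨hn, hA hp, hAU p hp, hA hq, hAU q hq⟩
  have key : ∀ x y : V,
      Relation.ReflTransGen (fun a b => a ∈ box N ∧ b ∈ box N ∧ b ∈ nbrs a) x y →
      x ∉ U →
      (y ∉ U → Relation.ReflTransGen
        (fun x y => y ∈ nbrs x ∧ x ∈ box N ∧ x ∉ U ∧ y ∈ box N ∧ y ∉ U) x y) ∧
      (y ∈ U → ∃ a ∈ A, Relation.ReflTransGen
        (fun x y => y ∈ nbrs x ∧ x ∈ box N ∧ x ∉ U ∧ y ∈ box N ∧ y ∉ U) x a) := by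
    intro x y h hx
    induction h with
    | refl => exact ⟨fun _ => Relation.ReflTransGen.refl, fun hy => absurd hy hx⟩
    | @tail y z hxy hyz ih =>
      obtain ⟨hyb, hzb, hzn⟩ := hyz
      by_cases hyU : y ∈ U
      · obtain ⟨a, ha, hxa⟩ := ih.2 hyU
        by_cases hzU : z ∈ U
        · exact ⟨fun h => absurd hzU h, fun _ => ⟨a, ha, hxa⟩⟩
        · have hzA : z ∈ A := by
            by_contra hzA
            exact hzU (hmax y hyU z hzn hzb hzA)
          exact ⟨fun _ => hxa.trans (hApath a ha z hzA), fun h => absurd h hzU⟩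
      · have hxy' := ih.1 hyU
        by_cases hzU : z ∈ U
        · have hyA : y ∈ A := by
            by_contra hyA
            exact hyU (hmax z hzU y (nbrs_symm hzn) hyb hyA)
          exact ⟨fun h => absurd hzU h, fun _ => ⟨y, hyA, hxy'⟩⟩
        · exact ⟨fun _ => hxy'.tail ⟨hzn, hyb, hyU, hzb, hzU⟩, fun h => absurd h hzU⟩
  set c : V := fun _ => (N:ℤ) with hc
  have hcb : c ∈ box N := mem_box.mpr fun i => by simp only [hc]; omega
  have hcib : c ∈ ibdry N := by
    rw [ibdry, Finset.mem_filter]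
    refine ⟨hcb, Function.update c 0 (c 0 + 1), ?_, ?_⟩
    · exact mem_nbrs.mpr ⟨0, true, by simp⟩
    · intro hmem
      have h0 := (mem_box.mp hmem 0).2
      rw [Function.update_self] at h0
      simp only [hc] at h0
      omega
  have hcU : c ∉ U := by
    intro h
    have hmem : c ∈ U ∩ ibdry N := Finset.mem_inter.mpr ⟨h, hcib⟩
    rw [hUb] at hmem
    exact absurd hmem (Finset.notMem_empty c)
  ext v
  simp only [psi, Finset.mem_filter]
  constructor
  · rintro ⟨hvb, hv⟩
    by_contra hvU
    rcases hv with hv | hv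
    · exact hvU hv
    · exact hv c hcib ((key v c (box_conn N v hvb c hcb) hvU).1 hcU)
  · intro hv
    exact ⟨hUbox v hv, Or.inl hv⟩

end Lattice
end
end
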